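/- In the first-order tangent algebra A = K[X]⧸((X - C s)(X - C t)), an element v ∈ A is a unit if and only if α(v) * β(v) is a unit of K; moreover, if u ∈ K satisfies (α(v) * β(v)) * u = 1, then v * (u • κ(v)) = 1, where κ(v) = algebraMap K A (α(v) + β(v)) - v, so that v⁻¹ = u • κ(v). -/

import Mathlib

open Polynomial

/-- The defining ideal of the first-order tangent algebra `K_{(t,s)}`. -/
noncomputable abbrev tIdeal (K : Type*) [CommRing K] (t s : K) : Ideal (Polynomial K) :=
  Ideal.span {(X - C s) * (X - C t)}

/-- The first-order tangent algebra `K_{(t,s)} = K[X] ⧸ ((X - C s) * (X - C t))`. -/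
abbrev TangentAlgebra₁ (K : Type*) [CommRing K] (t s : K) :=
  Polynomial K ⧸ tIdeal K t s

/-- An element `v` of the first-order tangent algebra is a unit iff `α(v) * β(v)` is a
unit of `K`; moreover if `(α(v) * β(v)) * u = 1` then `v * (u • κ(v)) = 1`, where
`κ(v) = algebraMap K A (α(v) + β(v)) - v`, so `v⁻¹ = u • κ(v)`. -/
theorem isUnit_iff_and_inverse_formula (K : Type*) [CommRing K] (t s : K)
    (α β : TangentAlgebra₁ K t s →ₐ[K] K)
    (hα : ∀ P : Polynomial K, α (Ideal.Quotient.mk (tIdeal K t s) P) = P.eval s)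
    (hβ : ∀ P : Polynomial K, β (Ideal.Quotient.mk (tIdeal K t s) P) = P.eval t) :
    ∀ v : TangentAlgebra₁ K t s,
      (IsUnit v ↔ IsUnit (α v * β v)) ∧
      (∀ u : K, (α v * β v) * u = 1 →
        v * (u • (algebraMap K (TangentAlgebra₁ K t s) (α v + β v) - v)) = 1) := by
  intro v
  -- key identity: v * (algebraMap (α v + β v) - v) = algebraMap (α v * β v)
  have key : v * (algebraMap K (TangentAlgebra₁ K t s) (α v + β v) - v)
      = algebraMap K (TangentAlgebra₁ K t s) (α v * β v) := by
    obtain ⟨P, rfl⟩ := Ideal.Quotient.mk_surjective v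
    rw [hα, hβ]
    have hmap : ∀ c : K, algebraMap K (TangentAlgebra₁ K t s) c
        = Ideal.Quotient.mk (tIdeal K t s) (C c) := fun c => rfl
    rw [hmap, hmap, ← map_sub, ← map_mul, Ideal.Quotient.eq,
      Ideal.mem_span_singleton]
    have h1 : (X - C s) ∣ (P - C (P.eval s)) := X_sub_C_dvd_sub_C_eval
    have h2 : (X - C t) ∣ (P - C (P.eval t)) := X_sub_C_dvd_sub_C_eval
    have : P * (C (P.eval s + P.eval t) - P) - C (P.eval s * P.eval t)
        = -((P - C (P.eval s)) * (P - C (P.eval t))) := by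
      simp only [C_add, C_mul]; ring
    rw [this]
    exact dvd_neg.mpr (mul_dvd_mul h1 h2)
  have formula : ∀ u : K, (α v * β v) * u = 1 →
      v * (u • (algebraMap K (TangentAlgebra₁ K t s) (α v + β v) - v)) = 1 := by
    intro u hu
    rw [mul_smul_comm, key, ← algebraMap_smul (TangentAlgebra₁ K t s) u, smul_eq_mul, ← map_mul, mul_comm u, hu, map_one]
  refine ⟨⟨fun hv => (hv.map α).mul (hv.map β), fun h => ?_⟩, formula⟩
  obtain ⟨w, hw⟩ := h
  exact IsUnit.of_mul_eq_one _ (formula ↑w⁻¹ (by rw [← hw]; exact w.mul_inv))
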